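/- Under the hypotheses of the previous statement (v ∈ H¹₀(Ω) solving the variational identity with boundary datum v̂ and 0 < ε ≤ 1), the Young-inequality refinement with parameter δ = 1/2 yields the stronger bound ε‖∇v‖² + ‖v‖² ≤ (1/4) ε^{−1} ‖v̂‖²_{H^{1/2}(Γ)}. -/

import Mathlib

open scoped InnerProductSpace

/-- Estimate (eq:Hm12estimate:estV2) from the proof of Lemma 4.8: if
`v ∈ H¹₀(Ω)` with `Δv ∈ H¹(Ω)` (weak Laplacian `lv`) satisfies the variational
identity
`ε^{3/2}(Δv,Δz) + (ε^{1/2}+ε)(∇v,∇z) + (v,z) = −ε^{1/4}⟨∇z·n, v̂⟩_Γ`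
for all `z ∈ H¹(Ω)` with `Δz ∈ L²(Ω)` and `z|_Γ = 0` — where the normal-trace
pairing is defined by duality, `⟨∇z·n, v̂⟩ = (Δz,u) + (∇z,∇u)` for any
extension `u` of `v̂` — then the Young-inequality refinement with parameter δ = 1/2 yields
`ε‖∇v‖² + ‖v‖² ≤ (1/4)ε^{-1}‖v̂‖²_{H^{1/2}(Γ)}`,
with `‖v̂‖²_{H^{1/2}(Γ)} = inf{‖u‖² + ε‖∇u‖² : u|_Γ = v̂}`. -/
theorem sp_dual_problem_estimate_V2
    {H1 L2 L2d Htr : Type*}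
    [NormedAddCommGroup H1] [NormedSpace ℝ H1]
    [NormedAddCommGroup L2] [InnerProductSpace ℝ L2]
    [NormedAddCommGroup L2d] [InnerProductSpace ℝ L2d]
    [NormedAddCommGroup Htr] [NormedSpace ℝ Htr]
    (ε : ℝ) (hε : 0 < ε) (hε1 : ε ≤ 1)
    (ι : H1 →ₗ[ℝ] L2) (grad : H1 →ₗ[ℝ] L2d) (tr : H1 →ₗ[ℝ] Htr)
    (v : H1) (lv : L2) (vhat : Htr)
    (hv0 : tr v = 0)
    -- lv is the weak Laplacian of v:
    (hlap : ∀ w : H1, tr w = 0 → ⟪lv, ι w⟫_ℝ = -⟪grad v, grad w⟫_ℝ)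
    -- Δv ∈ H¹(Ω):
    (hΔH1 : ∃ g : H1, ι g = lv)
    -- v̂ ∈ H^{1/2}(Γ), i.e. it has an H¹-extension:
    (hext : ∃ u : H1, tr u = vhat)
    -- the variational identity:
    (hvar : ∀ (z : H1) (lz : L2),
        (∀ w : H1, tr w = 0 → ⟪lz, ι w⟫_ℝ = -⟪grad z, grad w⟫_ℝ) →
        tr z = 0 → ∀ u : H1, tr u = vhat →
        ε ^ ((3:ℝ)/2) * ⟪lv, lz⟫_ℝ + (ε ^ ((1:ℝ)/2) + ε) * ⟪grad v, grad z⟫_ℝ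
            + ⟪ι v, ι z⟫_ℝ
          = -(ε ^ ((1:ℝ)/4)) * (⟪lz, ι u⟫_ℝ + ⟪grad z, grad u⟫_ℝ)) :
    ε * ‖grad v‖ ^ 2 + ‖ι v‖ ^ 2
      ≤ (1/4) * ε⁻¹ * sInf {r : ℝ | ∃ u : H1, tr u = vhat ∧
          r = ‖ι u‖ ^ 2 + ε * ‖grad u‖ ^ 2} := by
  obtain ⟨u0, hu0⟩ := hext
  have hεne : ε ≠ 0 := ne_of_gt hε
  have hbound : ∀ u : H1, tr u = vhat →
      ε * ‖grad v‖ ^ 2 + ‖ι v‖ ^ 2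
        ≤ (1/4) * ε⁻¹ * (‖ι u‖ ^ 2 + ε * ‖grad u‖ ^ 2) := by
    intro u hu
    have key := hvar v lv hlap hv0 u hu
    rw [real_inner_self_eq_norm_sq, real_inner_self_eq_norm_sq,
      real_inner_self_eq_norm_sq] at key
    have hi1 : -⟪lv, ι u⟫_ℝ ≤ ‖lv‖ * ‖ι u‖ := by
      have h1 := abs_real_inner_le_norm lv (ι u)
      have h2 := neg_abs_le (⟪lv, ι u⟫_ℝ); linarith
    have hi2 : -⟪grad v, grad u⟫_ℝ ≤ ‖grad v‖ * ‖grad u‖ := by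
      have h1 := abs_real_inner_le_norm (grad v) (grad u)
      have h2 := neg_abs_le (⟪grad v, grad u⟫_ℝ); linarith
    have e14pos : (0:ℝ) < ε ^ ((1:ℝ)/4) := Real.rpow_pos_of_pos hε _
    have h1 : ε ^ ((1:ℝ)/4) * ε ^ ((1:ℝ)/4) = ε ^ ((1:ℝ)/2) := by
      rw [← Real.rpow_add hε]; norm_num
    have h2 : ε ^ ((3:ℝ)/4) * ε ^ ((3:ℝ)/4) = ε ^ ((3:ℝ)/2) := by
      rw [← Real.rpow_add hε]; norm_num
    have h3 : ε ^ ((3:ℝ)/4) * ε ^ (-(1:ℝ)/2) = ε ^ ((1:ℝ)/4) := by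
      rw [← Real.rpow_add hε]; norm_num
    have h4 : ε ^ (-(1:ℝ)/2) * ε ^ (-(1:ℝ)/2) = ε⁻¹ := by
      rw [← Real.rpow_add hε]; norm_num
      rw [Real.rpow_neg_one]
    -- Young inequality 1
    have y1 : ε ^ ((1:ℝ)/4) * (‖lv‖ * ‖ι u‖)
        ≤ ε ^ ((3:ℝ)/2) * ‖lv‖ ^ 2 + (1/4) * ε⁻¹ * ‖ι u‖ ^ 2 := by
      have hsq := sq_nonneg (ε ^ ((3:ℝ)/4) * ‖lv‖ - (1/2) * ε ^ (-(1:ℝ)/2) * ‖ι u‖)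
      have hexp : (ε ^ ((3:ℝ)/4) * ‖lv‖ - (1/2) * ε ^ (-(1:ℝ)/2) * ‖ι u‖) ^ 2
          = (ε ^ ((3:ℝ)/4) * ε ^ ((3:ℝ)/4)) * ‖lv‖ ^ 2
            - (ε ^ ((3:ℝ)/4) * ε ^ (-(1:ℝ)/2)) * (‖lv‖ * ‖ι u‖)
            + (1/4) * (ε ^ (-(1:ℝ)/2) * ε ^ (-(1:ℝ)/2)) * ‖ι u‖ ^ 2 := by ring
      rw [h2, h3, h4] at hexp
      linarith [hexp ▸ hsq]
    -- Young inequality 2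
    have y2 : ε ^ ((1:ℝ)/4) * (‖grad v‖ * ‖grad u‖)
        ≤ ε ^ ((1:ℝ)/2) * ‖grad v‖ ^ 2 + (1/4) * ‖grad u‖ ^ 2 := by
      have hsq := sq_nonneg (ε ^ ((1:ℝ)/4) * ‖grad v‖ - (1/2) * ‖grad u‖)
      have hexp : (ε ^ ((1:ℝ)/4) * ‖grad v‖ - (1/2) * ‖grad u‖) ^ 2
          = (ε ^ ((1:ℝ)/4) * ε ^ ((1:ℝ)/4)) * ‖grad v‖ ^ 2
            - ε ^ ((1:ℝ)/4) * (‖grad v‖ * ‖grad u‖)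
            + (1/4) * ‖grad u‖ ^ 2 := by ring
      rw [h1] at hexp
      linarith [hexp ▸ hsq]
    have hk : ε ^ ((3:ℝ)/2) * ‖lv‖ ^ 2 + (ε ^ ((1:ℝ)/2) + ε) * ‖grad v‖ ^ 2
          + ‖ι v‖ ^ 2
        ≤ ε ^ ((1:ℝ)/4) * (‖lv‖ * ‖ι u‖)
          + ε ^ ((1:ℝ)/4) * (‖grad v‖ * ‖grad u‖) := by
      rw [key]
      have := add_le_add (mul_le_mul_of_nonneg_left hi1 e14pos.le)
        (mul_le_mul_of_nonneg_left hi2 e14pos.le)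
      linarith
    have hD : (1/4) * ε⁻¹ * (‖ι u‖ ^ 2 + ε * ‖grad u‖ ^ 2)
        = (1/4) * ε⁻¹ * ‖ι u‖ ^ 2 + (1/4) * ‖grad u‖ ^ 2 := by
      field_simp
    rw [hD]
    linarith
  -- pass to the infimum
  set S := sInf {r : ℝ | ∃ u : H1, tr u = vhat ∧
      r = ‖ι u‖ ^ 2 + ε * ‖grad u‖ ^ 2} with hS
  have hne : ({r : ℝ | ∃ u : H1, tr u = vhat ∧
      r = ‖ι u‖ ^ 2 + ε * ‖grad u‖ ^ 2}).Nonempty := ⟨_, u0, hu0, rfl⟩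
  have hlb : 4 * ε * (ε * ‖grad v‖ ^ 2 + ‖ι v‖ ^ 2) ≤ S := by
    apply le_csInf hne
    rintro r ⟨u, hu, rfl⟩
    have hb := hbound u hu
    have h := mul_le_mul_of_nonneg_left hb (by positivity : (0:ℝ) ≤ 4 * ε)
    calc 4 * ε * (ε * ‖grad v‖ ^ 2 + ‖ι v‖ ^ 2)
        ≤ 4 * ε * ((1/4) * ε⁻¹ * (‖ι u‖ ^ 2 + ε * ‖grad u‖ ^ 2)) := h
      _ = ‖ι u‖ ^ 2 + ε * ‖grad u‖ ^ 2 := by field_simp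
  calc ε * ‖grad v‖ ^ 2 + ‖ι v‖ ^ 2
      = (1/4) * ε⁻¹ * (4 * ε * (ε * ‖grad v‖ ^ 2 + ‖ι v‖ ^ 2)) := by
        field_simp
    _ ≤ (1/4) * ε⁻¹ * S :=
        mul_le_mul_of_nonneg_left hlb (by positivity)
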